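/- For all κ > 0 and Δt > 0, the covariance matrix ((σ_R², σ_{R,I}), (σ_{R,I}, σ_I²)) with σ_R² = (1-e^{-2κΔt})/(2κ), σ_I² = (2κΔt + 4e^{-κΔt} - e^{-2κΔt} - 3)/(2κ³), and σ_{R,I} = (1-e^{-κΔt})²/(2κ²) is positive semidefinite, i.e., σ_{R,I}² ≤ σ_R² σ_I². -/

import Mathlib

open Real

private lemma key_aux (x : ℝ) (hx : 0 ≤ x) :
    2 * (1 - Real.exp (-x)) ≤ x * (1 + Real.exp (-x)) := by
  set f : ℝ → ℝ := fun y => y * (1 + Real.exp (-y)) - 2 * (1 - Real.exp (-y)) with hf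
  have hderiv : ∀ y : ℝ, HasDerivAt f (1 - Real.exp (-y) * (1 + y)) y := by
    intro y
    have he : HasDerivAt (fun y : ℝ => Real.exp (-y)) (-Real.exp (-y)) y := by
      simpa using (hasDerivAt_neg y).exp
    have h1 : HasDerivAt (fun y : ℝ => y * (1 + Real.exp (-y)))
        (1 * (1 + Real.exp (-y)) + y * (0 + -Real.exp (-y))) y :=
      (hasDerivAt_id y).mul ((hasDerivAt_const y 1).add he)
    have h2 : HasDerivAt (fun y : ℝ => 2 * (1 - Real.exp (-y)))
        (2 * (0 - -Real.exp (-y))) y :=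
      ((hasDerivAt_const y 1).sub he).const_mul 2
    have := h1.sub h2
    rw [show 1 - Real.exp (-y) * (1 + y) = 1 * (1 + Real.exp (-y)) + y * (0 + -Real.exp (-y)) - 2 * (0 - -Real.exp (-y)) by ring]
    exact this
  have hmono : MonotoneOn f (Set.Ici (0:ℝ)) := by
    apply monotoneOn_of_deriv_nonneg (convex_Ici 0)
    · exact (Continuous.sub (continuous_id.mul (continuous_const.add
        (Real.continuous_exp.comp continuous_neg)))
        (continuous_const.mul (continuous_const.sub
        (Real.continuous_exp.comp continuous_neg)))).continuousOn
    · intro y _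
      exact (hderiv y).differentiableAt.differentiableWithinAt
    · intro y hy
      rw [(hderiv y).deriv]
      have hy' : 0 ≤ y := le_of_lt (by simpa using hy)
      have : Real.exp (-y) * (1 + y) ≤ 1 := by
        have h1 : 1 + y ≤ Real.exp y := by linarith [Real.add_one_le_exp y]
        have h2 : 0 < Real.exp (-y) := Real.exp_pos _
        calc Real.exp (-y) * (1 + y) ≤ Real.exp (-y) * Real.exp y := by
              apply mul_le_mul_of_nonneg_left h1 h2.le
          _ = 1 := by rw [← Real.exp_add]; simp
      linarith
  have h0 : f 0 = 0 := by simp [hf]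
  have := hmono (Set.self_mem_Ici) (Set.mem_Ici.mpr hx) hx
  rw [h0] at this
  simpa [hf] using this

/-- For all `κ > 0` and `Δt > 0`, the covariance matrix of
`(R_{t+Δt} - R_t, I_{t+Δt} - I_t)` given `R_t` is positive semidefinite, i.e.
`σ_{R,I}² ≤ σ_R² σ_I²` for
`σ_R² = (1-e^{-2κΔt})/(2κ)`, `σ_I² = (2κΔt + 4e^{-κΔt} - e^{-2κΔt} - 3)/(2κ³)` and
`σ_{R,I} = (1-e^{-κΔt})²/(2κ²)`. -/
theorem covariance_matrix_psd (κ Δt : ℝ) (hκ : 0 < κ) (hΔt : 0 < Δt) :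
    ((1 - Real.exp (-κ * Δt)) ^ 2 / (2 * κ ^ 2)) ^ 2
      ≤ ((1 - Real.exp (-2 * κ * Δt)) / (2 * κ)) *
        ((2 * κ * Δt + 4 * Real.exp (-κ * Δt) - Real.exp (-2 * κ * Δt) - 3) / (2 * κ ^ 3)) := by
  have hrw1 : -κ * Δt = -(κ * Δt) := by ring
  have hrw2 : 2 * κ * Δt = 2 * (κ * Δt) := by ring
  rw [hrw1, hrw2]
  set x := κ * Δt with hx
  have hxpos : 0 < x := mul_pos hκ hΔt
  have hsub : -2 * κ * Δt = -x + -x := by rw [hx]; ring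
  set u := Real.exp (-x) with hu
  have hu2 : Real.exp (-2 * κ * Δt) = u ^ 2 := by
    rw [hsub, Real.exp_add]; ring
  have hupos : 0 < u := Real.exp_pos _
  have hult : u < 1 := by
    rw [hu]; exact Real.exp_lt_one_iff.mpr (by linarith)
  have hkey : 2 * (1 - u) ≤ x * (1 + u) := key_aux x hxpos.le
  rw [hu2]
  have hκ4 : (0:ℝ) < 4 * κ ^ 4 := by positivity
  rw [div_pow, div_mul_div_comm]
  rw [div_le_div_iff₀ (by positivity) (by positivity)]
  have hpoly : (1 - u) ^ 4 ≤ (1 - u ^ 2) * (2 * x + 4 * u - u ^ 2 - 3) := by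
    nlinarith [mul_le_mul_of_nonneg_left hkey (by linarith : (0:ℝ) ≤ 1 - u),
      sq_nonneg (1 - u), hupos.le]
  nlinarith [hpoly, hκ4, sq_nonneg ((1-u)^2), mul_pos hκ hκ]
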